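/- Let q : ℝ → ℝ be continuous with q(t) ≥ 0 for all t ≥ 0, and let j, z : ℝ → ℝ be twice differentiable functions satisfying j(0) = z(0) = 0, j'(0) = z'(0) = 1, j''(t) ≤ q(t)·j(t) for all t ≥ 0, z''(t) = q(t)·z(t) for all t ≥ 0, and j(t) > 0 for all t > 0. Then j(t) ≤ z(t) for all t ≥ 0. -/

import Mathlib

open Real Set Filter Topology

theorem sturm_comparison
    (q j z : ℝ → ℝ)
    (hq : Continuous q) (hq0 : ∀ t : ℝ, 0 ≤ t → 0 ≤ q t)
    (hj : Differentiable ℝ j) (hj' : Differentiable ℝ (deriv j))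
    (hz : Differentiable ℝ z) (hz' : Differentiable ℝ (deriv z))
    (hj0 : j 0 = 0) (hz0 : z 0 = 0)
    (hdj0 : deriv j 0 = 1) (hdz0 : deriv z 0 = 1)
    (hjineq : ∀ t : ℝ, 0 ≤ t → deriv (deriv j) t ≤ q t * j t)
    (hzeq : ∀ t : ℝ, 0 ≤ t → deriv (deriv z) t = q t * z t)
    (hjpos : ∀ t : ℝ, 0 < t → 0 < j t) :
    ∀ t : ℝ, 0 ≤ t → j t ≤ z t := by
  have hzc : Continuous z := hz.continuous
  have hjc : Continuous j := hj.continuous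
  -- slope limits at 0
  have hslope_z : Tendsto (fun s => z s / s) (𝓝[>] (0:ℝ)) (𝓝 1) := by
    have h : HasDerivAt z 1 0 := by
      have := (hz 0).hasDerivAt; rwa [hdz0] at this
    have h2 := (hasDerivAt_iff_tendsto_slope.mp h).mono_left
      (nhdsWithin_mono 0 (fun x hx => ne_of_gt hx))
    refine h2.congr (fun s => ?_)
    simp [slope_def_field, hz0, div_eq_inv_mul]
  have hslope_j : Tendsto (fun s => j s / s) (𝓝[>] (0:ℝ)) (𝓝 1) := by
    have h : HasDerivAt j 1 0 := by
      have := (hj 0).hasDerivAt; rwa [hdj0] at this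
    have h2 := (hasDerivAt_iff_tendsto_slope.mp h).mono_left
      (nhdsWithin_mono 0 (fun x hx => ne_of_gt hx))
    refine h2.congr (fun s => ?_)
    simp [slope_def_field, hj0, div_eq_inv_mul]
  -- Step A : z is positive on (0, ∞)
  have hzpos : ∀ t : ℝ, 0 < t → 0 < z t := by
    by_contra hcon
    push_neg at hcon
    obtain ⟨t₁, ht₁, hzt₁⟩ := hcon
    set s : Set ℝ := {t | 0 < t ∧ z t ≤ 0} with hs
    have hsne : s.Nonempty := ⟨t₁, ht₁, hzt₁⟩
    have hbdd : BddBelow s := ⟨0, fun x hx => hx.1.le⟩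
    set T := sInf s with hT
    -- z is positive slightly to the right of 0
    have hδ : ∀ᶠ u in 𝓝[>] (0:ℝ), 0 < z u := by
      have h2 : ∀ᶠ u in 𝓝[>] (0:ℝ), (1:ℝ)/2 < z u / u :=
        hslope_z.eventually (eventually_gt_nhds (by norm_num))
      filter_upwards [h2, self_mem_nhdsWithin] with u hu hu0
      have hu0' : (0:ℝ) < u := hu0
      nlinarith [mul_pos (by linarith : (0:ℝ) < z u / u) hu0',
        div_mul_cancel₀ (z u) (ne_of_gt hu0')]
    obtain ⟨δ, hδ0, hδ2⟩ := mem_nhdsGT_iff_exists_Ioo_subset.mp hδ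
    have hδ0 : (0:ℝ) < δ := hδ0
    -- T is at least δ
    have hTδ : δ ≤ T := by
      refine le_csInf hsne (fun x hx => ?_)
      by_contra hlt
      push_neg at hlt
      exact absurd hx.2 (not_le.mpr (hδ2 ⟨hx.1, hlt⟩))
    have hT0 : 0 < T := lt_of_lt_of_le hδ0 hTδ
    -- z T ≤ 0
    have hzT : z T ≤ 0 := by
      have hcl : T ∈ closure s := csInf_mem_closure hsne hbdd
      have : closure s ⊆ {t | z t ≤ 0} :=
        closure_minimal (fun x hx => hx.2) (isClosed_le hzc continuous_const)
      exact this hcl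
    -- z is nonneg on [0, T]
    have hmid : ∀ u : ℝ, 0 < u → u < T → 0 < z u := by
      intro u hu0 huT
      by_contra hzu
      push_neg at hzu
      exact absurd (csInf_le hbdd ⟨hu0, hzu⟩) (not_le.mpr huT)
    have hznn : ∀ u ∈ Icc (0:ℝ) T, 0 ≤ z u := by
      intro u hu
      rcases eq_or_lt_of_le hu.1 with h0 | h0
      · simp [← h0, hz0]
      rcases eq_or_lt_of_le hu.2 with h1 | h1
      · -- z T ≥ 0 by continuity from the left
        rw [h1]
        have htd : Tendsto z (𝓝[<] T) (𝓝 (z T)) :=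
          (hzc.tendsto T).mono_left nhdsWithin_le_nhds
        refine ge_of_tendsto htd ?_
        filter_upwards [Ioo_mem_nhdsLT_of_mem ⟨hT0, le_refl T⟩] with v hv
        exact (hmid v hv.1 hv.2).le
      · exact (hmid u h0 h1).le
    -- deriv z is monotone on [0, T]
    have hmono : MonotoneOn (deriv z) (Icc 0 T) := by
      apply monotoneOn_of_deriv_nonneg (convex_Icc 0 T) hz'.continuous.continuousOn
        hz'.differentiableOn
      intro x hx
      rw [interior_Icc] at hx
      rw [hzeq x hx.1.le]
      exact mul_nonneg (hq0 x hx.1.le) (hznn x ⟨hx.1.le, hx.2.le⟩)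
    have hd1 : ∀ u ∈ Icc (0:ℝ) T, (1:ℝ) ≤ deriv z u := by
      intro u hu
      have := hmono (left_mem_Icc.mpr hT0.le) hu hu.1
      rwa [hdz0] at this
    have hsm : StrictMonoOn z (Icc 0 T) := by
      apply strictMonoOn_of_deriv_pos (convex_Icc 0 T) hzc.continuousOn
      intro x hx
      rw [interior_Icc] at hx
      have := hd1 x ⟨hx.1.le, hx.2.le⟩
      linarith
    have : z 0 < z T := hsm (left_mem_Icc.mpr hT0.le) (right_mem_Icc.mpr hT0.le) hT0
    rw [hz0] at this
    linarith
  -- Step B : the Wronskian W = j' z - j z' is nonpositive on [0, ∞)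
  set W : ℝ → ℝ := fun t => deriv j t * z t - j t * deriv z t with hWdef
  have hWd : ∀ t : ℝ, HasDerivAt W
      (deriv (deriv j) t * z t - j t * deriv (deriv z) t) t := by
    intro t
    have h1 := ((hj' t).hasDerivAt.mul (hz t).hasDerivAt).sub
      ((hj t).hasDerivAt.mul (hz' t).hasDerivAt)
    exact h1.congr_deriv (by ring)
  have hWdiff : Differentiable ℝ W := fun t => (hWd t).differentiableAt
  have hWanti : AntitoneOn W (Ici 0) := by
    apply antitoneOn_of_deriv_nonpos (convex_Ici 0) hWdiff.continuous.continuousOn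
      hWdiff.differentiableOn
    intro x hx
    rw [interior_Ici] at hx
    rw [(hWd x).deriv, hzeq x hx.le]
    have h1 : deriv (deriv j) x * z x ≤ q x * j x * z x :=
      mul_le_mul_of_nonneg_right (hjineq x hx.le) (hzpos x hx).le
    nlinarith
  have hWle : ∀ t : ℝ, 0 ≤ t → W t ≤ 0 := by
    intro t ht
    have := hWanti (self_mem_Ici) ht ht
    simpa [hWdef, hj0, hz0] using this
  -- Step C : j/z is antitone on (0, ∞)
  have hranti : AntitoneOn (fun t => j t / z t) (Ioi 0) := by
    apply antitoneOn_of_deriv_nonpos (convex_Ioi 0)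
    · exact ContinuousOn.div hjc.continuousOn hzc.continuousOn
        (fun x hx => ne_of_gt (hzpos x hx))
    · rw [interior_Ioi]
      intro x hx
      exact (((hj x).hasDerivAt.div (hz x).hasDerivAt (ne_of_gt (hzpos x hx))).differentiableAt).differentiableWithinAt
    · rw [interior_Ioi]
      intro x hx
      change deriv (j / z) x ≤ 0
      rw [((hj x).hasDerivAt.div (hz x).hasDerivAt (ne_of_gt (hzpos x hx))).deriv]
      apply div_nonpos_of_nonpos_of_nonneg
      · exact hWle x hx.le
      · positivity
  -- ratio tends to 1 at 0⁺
  have hrlim : Tendsto (fun t => j t / z t) (𝓝[>] (0:ℝ)) (𝓝 1) := by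
    have h := hslope_j.div hslope_z one_ne_zero
    simp only [div_one] at h
    refine h.congr' ?_
    filter_upwards [self_mem_nhdsWithin] with u hu
    have hu0 : (0:ℝ) < u := hu
    have hz0' : z u ≠ 0 := ne_of_gt (hzpos u hu0)
    simp only [Pi.div_apply]
    field_simp
  -- conclusion
  intro t ht
  rcases eq_or_lt_of_le ht with h0 | h0
  · simp [← h0, hj0, hz0]
  have hle1 : j t / z t ≤ 1 := by
    refine ge_of_tendsto hrlim ?_
    filter_upwards [Ioo_mem_nhdsGT_of_mem ⟨le_refl 0, h0⟩] with u hu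
    simpa using hranti (mem_Ioi.mpr hu.1) (mem_Ioi.mpr h0) hu.2.le
  exact (div_le_one (hzpos t h0)).mp hle1
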